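/- Every generalized multi-stack nested-word automaton can be simulated by a multi-stack nested-word automaton without calling states: for every generalized MNWA B over a K-stack call-return alphabet there exists an MNWA B' (with empty set of calling states) over the same alphabet such that L(B') = L(B). Moreover, B' can be chosen with state set Q × {0,1,2}^[K] where Q is the state set of B. -/

import Mathlib

/-- The *kind* of a letter in a `K`-stack call-return alphabet: a call of some
stack `s`, a return of some stack `s`, or an internal action. -/
inductive CRKind (K : ℕ) where
  | call (s : Fin K)
  | ret (s : Fin K)
  | int

/-- A `K`-stack call-return alphabet over the letters `A`: every letter is
(exclusively) a call of one stack, a return of one stack, or internal.  This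
encodes the pairwise disjointness of the collection
`⟨{(Σ_c^s, Σ_r^s)}_{s∈[K]}, Σ_int⟩` together with `Σ` being their union. -/
structure CRAlphabet (K : ℕ) (A : Type) where
  kind : A → CRKind K

namespace CRAlphabet

variable {K : ℕ} {A : Type}

def callSet (h : CRAlphabet K A) (s : Fin K) : Set A := {a | h.kind a = .call s}
def retSet (h : CRAlphabet K A) (s : Fin K) : Set A := {a | h.kind a = .ret s}
def intSet (h : CRAlphabet K A) : Set A := {a | h.kind a = .int}

end CRAlphabet

/-- `s`-well-formed strings: generated by the grammar
`A ::= aAb | AA | ε | c` with `a ∈ c`, `b ∈ r`, `c ∉ c ∪ r`. -/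
inductive SWellFormed {A : Type} (c r : Set A) : List A → Prop where
  | nil : SWellFormed c r []
  | single {x : A} : x ∉ c → x ∉ r → SWellFormed c r [x]
  | wrap {a b : A} {u : List A} : a ∈ c → b ∈ r → SWellFormed c r u →
      SWellFormed c r (a :: u ++ [b])
  | concat {u v : List A} : SWellFormed c r u → SWellFormed c r v →
      SWellFormed c r (u ++ v)

/-- The matching relation `μ^s` of the nested word determined by the string
`w` (positions `0`-based): `(i,j) ∈ μ^s` iff `i < j`, `λ(i) ∈ Σ_c^s`,
`λ(j) ∈ Σ_r^s` and `λ(i+1) … λ(j-1)` is `s`-well formed. -/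
def Matched {K : ℕ} {A : Type} (h : CRAlphabet K A) (w : List A) (s : Fin K)
    (i j : ℕ) : Prop :=
  i < j ∧ j < w.length ∧
  (∃ a, w[i]? = some a ∧ a ∈ h.callSet s) ∧
  (∃ b, w[j]? = some b ∧ b ∈ h.retSet s) ∧
  SWellFormed (h.callSet s) (h.retSet s) ((w.take j).drop (i + 1))

/-- The full matching relation `μ = ⋃_s μ^s`. -/
def MuAny {K : ℕ} {A : Type} (h : CRAlphabet K A) (w : List A) (i j : ℕ) : Prop :=
  ∃ s, Matched h w s i j

/-- A generalized multi-stack nested-word automaton (generalized MNWA) over a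
`K`-stack call-return alphabet: `delta1` contains local/push/unmatched-return
transitions, `delta2` the transitions at matched returns (consulting also the
state reached at the matching call); `qC` is the set of calling states.  An
MNWA is a generalized MNWA with `qC = ∅`. -/
structure GMNWA (K : ℕ) (A : Type) (Q : Type) where
  delta1 : Q → A → Q → Prop
  delta2 : Q → Q → A → Q → Prop
  qI : Set Q
  qF : Set Q
  qC : Set Q

/-- `ρ` is a run of the generalized MNWA `B` on the (nonempty) nested word of
`w` (positions `0`-based). -/
def gRun {K : ℕ} {A Q : Type} (h : CRAlphabet K A) (B : GMNWA K A Q)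
    (w : List A) (ρ : ℕ → Q) : Prop :=
  (∃ q ∈ B.qI, ∃ a, w[0]? = some a ∧ B.delta1 q a (ρ 0)) ∧
  ∀ i, 0 < i → i < w.length → ∃ a, w[i]? = some a ∧
    ((∃ j, MuAny h w j i ∧ B.delta2 (ρ j) (ρ (i - 1)) a (ρ i)) ∨
     ((¬ ∃ j, MuAny h w j i) ∧ B.delta1 (ρ (i - 1)) a (ρ i)))

/-- The run `ρ` of `B` on `w` is accepting: it ends in a final state, and
every position carrying a calling state is a call with a matching return. -/
def gAcc {K : ℕ} {A Q : Type} (h : CRAlphabet K A) (B : GMNWA K A Q)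
    (w : List A) (ρ : ℕ → Q) : Prop :=
  ρ (w.length - 1) ∈ B.qF ∧ ∀ i < w.length, ρ i ∈ B.qC → ∃ j, MuAny h w i j

/-- The language of the generalized MNWA `B` (as a set of nonempty strings,
identified with their nested words via the canonical bijection). -/
def gLang {K : ℕ} {A Q : Type} (h : CRAlphabet K A) (B : GMNWA K A Q) :
    Set (List A) :=
  {w | w ≠ [] ∧ ∃ ρ, gRun h B w ρ ∧ gAcc h B w ρ}


open scoped Classical

noncomputable def scount {A : Type} (S : Set A) : List A → ℕ
  | [] => 0
  | x :: u => (if x ∈ S then 1 else 0) + scount S u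

section counts
variable {A : Type} {S c r : Set A}

lemma scount_nil : scount S ([] : List A) = 0 := rfl
lemma scount_cons (x : A) (u : List A) :
    scount S (x :: u) = (if x ∈ S then 1 else 0) + scount S u := rfl

lemma scount_append (u v : List A) :
    scount S (u ++ v) = scount S u + scount S v := by
  induction u with
  | nil => simp [scount]
  | cons x u ih => simp [scount_cons, ih]; omega

lemma swf_balance (hd : ∀ x, x ∈ c → x ∈ r → False)
    {u : List A} (hu : SWellFormed c r u) : scount c u = scount r u := by
  induction hu with
  | nil => rfl
  | single hx hy => simp [scount_cons, scount_nil, hx, hy]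
  | @wrap a b u ha hb hu ih =>
      have hanr : a ∉ r := fun hh => hd _ ha hh
      have hbnc : b ∉ c := fun hh => hd _ hh hb
      simp [scount_append, scount_cons, scount_nil, ha, hb, hanr, hbnc, ih]
      omega
  | concat hu hv ihu ihv => simp [scount_append, ihu, ihv]

lemma swf_prefix (hd : ∀ x, x ∈ c → x ∈ r → False)
    {u : List A} (hu : SWellFormed c r u) :
    ∀ n, scount r (u.take n) ≤ scount c (u.take n) := by
  induction hu with
  | nil => simp [scount]
  | single hx hy =>
      intro n
      cases n with
      | zero => simp [scount]
      | succ n => simp [scount_cons, scount_nil, hx, hy]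
  | @wrap a b u ha hb hu ih =>
      intro n
      cases n with
      | zero => simp [scount]
      | succ n =>
        have hanr : a ∉ r := fun hh => hd _ ha hh
        have hbnc : b ∉ c := fun hh => hd _ hh hb
        rw [show (a :: u ++ [b]) = a :: (u ++ [b]) by simp, List.take_succ_cons]
        rcases le_or_gt n u.length with hn | hn
        · rw [List.take_append_of_le_length hn]
          simp [scount_cons, ha, hanr]
          exact le_trans (ih n) (by omega)
        · have : n ≥ (u ++ [b]).length := by simp; omega
          rw [List.take_of_length_le this]
          simp [scount_cons, scount_append, scount_nil, ha, hanr, hb, hbnc,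
            swf_balance hd hu]
  | @concat u v hu hv ihu ihv =>
      intro n
      rw [List.take_append, scount_append, scount_append]
      exact Nat.add_le_add (ihu n) (ihv _)

lemma swf_suffix (hd : ∀ x, x ∈ c → x ∈ r → False)
    {u : List A} (hu : SWellFormed c r u) :
    ∀ n, scount c (u.drop n) ≤ scount r (u.drop n) := by
  intro n
  have h1 := swf_balance hd hu
  have h2 := swf_prefix hd hu n
  have h3 : scount c (u.take n) + scount c (u.drop n) = scount c u := by
    rw [← scount_append, List.take_append_drop]
  have h4 : scount r (u.take n) + scount r (u.drop n) = scount r u := by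
    rw [← scount_append, List.take_append_drop]
  omega

end counts

section structural
variable {K : ℕ} {A : Type}

lemma call_ret_disj (h : CRAlphabet K A) {s s' : Fin K} {a : A}
    (h1 : a ∈ h.callSet s) (h2 : a ∈ h.retSet s') : False := by
  simp only [CRAlphabet.callSet, CRAlphabet.retSet, Set.mem_setOf_eq] at h1 h2
  rw [h1] at h2; cases h2

lemma ret_stack_eq (h : CRAlphabet K A) {s s' : Fin K} {a : A}
    (h1 : a ∈ h.retSet s) (h2 : a ∈ h.retSet s') : s = s' := by
  simp only [CRAlphabet.retSet, Set.mem_setOf_eq] at h1 h2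
  rw [h1] at h2; cases h2; rfl

lemma call_stack_eq (h : CRAlphabet K A) {s s' : Fin K} {a : A}
    (h1 : a ∈ h.callSet s) (h2 : a ∈ h.callSet s') : s = s' := by
  simp only [CRAlphabet.callSet, Set.mem_setOf_eq] at h1 h2
  rw [h1] at h2; cases h2; rfl

lemma hdisj (h : CRAlphabet K A) (s : Fin K) :
    ∀ x, x ∈ h.callSet s → x ∈ h.retSet s → False :=
  fun _ h1 h2 => call_ret_disj h h1 h2

/-- A call cannot have two distinct matching returns. -/
lemma matched_ret_unique (h : CRAlphabet K A) {w : List A} {s : Fin K}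
    {i r₁ r₂ : ℕ} (hm1 : Matched h w s i r₁) (hm2 : Matched h w s i r₂) :
    r₁ = r₂ := by
  have key : ∀ r₁ r₂, Matched h w s i r₁ → Matched h w s i r₂ → r₁ < r₂ → False := by
    intro r₁ r₂ hm1 hm2 hlt
    obtain ⟨hi1, hl1, _, ⟨b, hb, hbr⟩, hwf1⟩ := hm1
    obtain ⟨hi2, hl2, _, _, hwf2⟩ := hm2
    obtain ⟨hbl, hbe⟩ := List.getElem?_eq_some_iff.mp hb
    -- the prefix of u₂ of length r₁ - i is u₁ ++ [b]
    have hpre : ((w.take r₂).drop (i+1)).take (r₁ - i) = (w.take r₁).drop (i+1) ++ [b] := by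
      rw [List.take_drop]
      have : i + 1 + (r₁ - i) = r₁ + 1 := by omega
      rw [this, List.take_take, min_eq_left (by omega), List.take_succ, hb]
      rw [List.drop_append_of_le_length (by simp; omega)]
      rfl
    have h1 := swf_prefix (hdisj h s) hwf2 (r₁ - i)
    rw [hpre] at h1
    have hbal := swf_balance (hdisj h s) hwf1
    have hbnc : b ∉ h.callSet s := fun hc => call_ret_disj h hc hbr
    simp [scount_append, scount_cons, scount_nil, hbr, hbnc] at h1
    omega
  rcases lt_trichotomy r₁ r₂ with hl | he | hl
  · exact absurd (key _ _ hm1 hm2 hl) (by simp)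
  · exact he
  · exact absurd (key _ _ hm2 hm1 hl) (by simp)

/-- A return cannot have two distinct matching calls. -/
lemma matched_call_unique (h : CRAlphabet K A) {w : List A} {s : Fin K}
    {i₁ i₂ r : ℕ} (hm1 : Matched h w s i₁ r) (hm2 : Matched h w s i₂ r) :
    i₁ = i₂ := by
  have key : ∀ i₁ i₂, Matched h w s i₁ r → Matched h w s i₂ r → i₁ < i₂ → False := by
    intro i₁ i₂ hm1 hm2 hlt
    obtain ⟨hi1, hl1, _, _, hwf1⟩ := hm1
    obtain ⟨hi2, hl2, ⟨a, ha, hac⟩, _, hwf2⟩ := hm2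
    obtain ⟨hal, hae⟩ := List.getElem?_eq_some_iff.mp ha
    have hsuf : ((w.take r).drop (i₁+1)).drop (i₂ - i₁ - 1) = a :: (w.take r).drop (i₂+1) := by
      rw [List.drop_drop]
      have : i₁ + 1 + (i₂ - i₁ - 1) = i₂ := by omega
      rw [this, List.drop_eq_getElem_cons (by simp; omega)]
      congr 1
      · rw [List.getElem_take]; exact hae
    have h1 := swf_suffix (hdisj h s) hwf1 (i₂ - i₁ - 1)
    rw [hsuf] at h1
    have hbal := swf_balance (hdisj h s) hwf2
    have hanr : a ∉ h.retSet s := fun hc => call_ret_disj h hac hc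
    simp [scount_cons, hac, hanr] at h1
    omega
  rcases lt_trichotomy i₁ i₂ with hl | he | hl
  · exact absurd (key _ _ hm1 hm2 hl) (by simp)
  · exact he
  · exact absurd (key _ _ hm2 hm1 hl) (by simp)

lemma mu_lt {h : CRAlphabet K A} {w : List A} {j i : ℕ}
    (hm : MuAny h w j i) : j < i := by
  obtain ⟨s, hm⟩ := hm; exact hm.1

lemma mu_ret {h : CRAlphabet K A} {w : List A} {j i : ℕ}
    (hm : MuAny h w j i) : ∃ s b, w[i]? = some b ∧ b ∈ h.retSet s ∧ Matched h w s j i := by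
  obtain ⟨s, hm⟩ := hm
  obtain ⟨b, hb, hbr⟩ := hm.2.2.2.1
  exact ⟨s, b, hb, hbr, hm⟩

/-- The matching call of a return is unique (across stacks too). -/
lemma mu_call_unique {h : CRAlphabet K A} {w : List A} {j j' i : ℕ}
    (hm : MuAny h w j i) (hm' : MuAny h w j' i) : j = j' := by
  obtain ⟨s, b, hb, hbr, hmm⟩ := mu_ret hm
  obtain ⟨s', b', hb', hbr', hmm'⟩ := mu_ret hm'
  rw [hb] at hb'
  cases hb'
  have hss : s = s' := ret_stack_eq h hbr hbr'
  subst hss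
  exact matched_call_unique h hmm hmm'
end structural

section inner
variable {A : Type} {c r : Set A}

/-- In a well-formed string, every call is matched within the string. -/
lemma swf_inner_call (hd : ∀ x, x ∈ c → x ∈ r → False) {u : List A}
    (hu : SWellFormed c r u) :
    ∀ k x, u[k]? = some x → x ∈ c →
      ∃ l y, k < l ∧ u[l]? = some y ∧ y ∈ r ∧
        SWellFormed c r ((u.take l).drop (k+1)) := by
  induction hu with
  | nil => intro k x hk; simp at hk
  | @single z hx hy =>
      intro k x hk hkc
      cases k with
      | zero => simp at hk; subst hk; exact absurd hkc hx
      | succ k => simp at hk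
  | @wrap a b u ha hb hu ih =>
      intro k x hk hkc
      have hL : (a :: u ++ [b]) = a :: (u ++ [b]) := by simp
      cases k with
      | zero =>
        refine ⟨u.length + 1, b, by omega, ?_, hb, ?_⟩
        · rw [hL, List.getElem?_cons_succ, List.getElem?_append_right (by omega)]
          simp
        · have h1 : (a :: u ++ [b]).take (u.length + 1) = a :: u := by
            rw [show (a :: u ++ [b]) = (a :: u) ++ [b] by simp,
              List.take_append_of_le_length (by simp),
              List.take_of_length_le (by simp)]
          rw [h1]
          simpa using hu
      | succ n =>
        rw [hL, List.getElem?_cons_succ] at hk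
        rcases Nat.lt_or_ge n u.length with hn | hn
        · rw [List.getElem?_append, if_pos hn] at hk
          obtain ⟨l, y, hkl, hly, hyr, hwf⟩ := ih n x hk hkc
          have hlu : l < u.length := (List.getElem?_eq_some_iff.mp hly).1
          refine ⟨l + 1, y, by omega, ?_, hyr, ?_⟩
          · rw [hL, List.getElem?_cons_succ, List.getElem?_append, if_pos hlu]
            exact hly
          · have h1 : (a :: u ++ [b]).take (l+1) = a :: u.take l := by
              rw [hL, List.take_succ_cons, List.take_append_of_le_length (le_of_lt hlu)]
            rw [h1, List.drop_succ_cons]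
            exact hwf
        · have hnu : n = u.length := by
            have := (List.getElem?_eq_some_iff.mp hk).1
            simp at this; omega
          rw [List.getElem?_append_right (by omega), hnu] at hk
          simp at hk
          subst hk
          exact absurd hkc (fun hc => hd _ hc hb)
  | @concat u v hu hv ihu ihv =>
      intro k x hk hkc
      rcases Nat.lt_or_ge k u.length with hku | hku
      · rw [List.getElem?_append, if_pos hku] at hk
        obtain ⟨l, y, hkl, hly, hyr, hwf⟩ := ihu k x hk hkc
        have hlu : l < u.length := (List.getElem?_eq_some_iff.mp hly).1
        refine ⟨l, y, hkl, ?_, hyr, ?_⟩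
        · rw [List.getElem?_append, if_pos hlu]; exact hly
        · rw [List.take_append_of_le_length (le_of_lt hlu)]; exact hwf
      · rw [List.getElem?_append_right hku] at hk
        obtain ⟨l, y, hkl, hly, hyr, hwf⟩ := ihv (k - u.length) x hk hkc
        refine ⟨u.length + l, y, by omega, ?_, hyr, ?_⟩
        · rw [List.getElem?_append_right (by omega)]
          simpa using hly
        · rw [List.take_append,
            List.take_of_length_le (by omega),
            show u.length + l - u.length = l by omega,
            List.drop_append,
            List.drop_of_length_le (by omega),
            show k + 1 - u.length = k - u.length + 1 by omega]
          simpa using hwf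

end inner

section innerlift
variable {K : ℕ} {A : Type}

/-- A call lying strictly inside a matched pair of the same stack is itself
matched (within the pair). -/
lemma matched_inner (h : CRAlphabet K A) {w : List A} {s : Fin K} {b rr p : ℕ}
    (hm : Matched h w s b rr) (hbp : b < p) (hpr : p < rr) {a : A}
    (hpa : w[p]? = some a) (hac : a ∈ h.callSet s) :
    ∃ r', Matched h w s p r' ∧ r' < rr := by
  obtain ⟨hblt, hrl, hcall, hret, hwf⟩ := hm
  set u := (w.take rr).drop (b+1) with hu
  have huk : u[p - b - 1]? = some a := by
    rw [hu, List.getElem?_drop, List.getElem?_take]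
    rw [if_pos (by omega), show b + 1 + (p - b - 1) = p by omega]
    exact hpa
  obtain ⟨l, y, hkl, hly, hyr, hwf'⟩ := swf_inner_call (hdisj h s) hwf _ _ huk hac
  have hlu : l < u.length := (List.getElem?_eq_some_iff.mp hly).1
  have hulen : u.length = rr - (b+1) := by
    rw [hu]; simp; omega
  have hwy : w[b+1+l]? = some y := by
    rw [hu, List.getElem?_drop, List.getElem?_take, if_pos (by omega)] at hly
    exact hly
  refine ⟨b + 1 + l, ⟨by omega, by omega, ⟨a, hpa, hac⟩, ⟨y, hwy, hyr⟩, ?_⟩, by omega⟩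
  have h1 : u.take l = (w.take (b+1+l)).drop (b+1) := by
    rw [hu, List.take_drop, List.take_take, min_eq_left (by omega)]
  rw [h1, List.drop_drop, show b + 1 + (p - b - 1 + 1) = p + 1 by omega] at hwf'
  exact hwf'

end innerlift

section construction
variable {K : ℕ} {A Q : Type}

def tick (x : Fin 3) : Fin 3 := if x = 2 then 1 else x

def stepTick {K : ℕ} (pre : Fin K → Fin 3) : Fin K → Fin 3 := fun t => tick (pre t)
noncomputable def stepMark {K : ℕ} (pre : Fin K → Fin 3) (s : Fin K) : Fin K → Fin 3 :=
  fun t => if t = s ∧ pre s = 0 then 2 else tick (pre t)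
noncomputable def stepRet {K : ℕ} (pre g : Fin K → Fin 3) (s : Fin K) : Fin K → Fin 3 :=
  fun t => if t = s ∧ g s = 2 then 0 else tick (pre t)

/-- The simulating MNWA. -/
noncomputable def mkB' (h : CRAlphabet K A) (B : GMNWA K A Q) :
    GMNWA K A (Q × (Fin K → Fin 3)) where
  delta1 p a p' := B.delta1 p.1 a p'.1 ∧
    ((p'.1 ∈ B.qC ∧ ∃ s, h.kind a = CRKind.call s ∧ p'.2 = stepMark p.2 s) ∨
     (p'.1 ∉ B.qC ∧ p'.2 = stepTick p.2))
  delta2 pc p a p' := B.delta2 pc.1 p.1 a p'.1 ∧ p'.1 ∉ B.qC ∧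
    ∃ s, h.kind a = CRKind.ret s ∧ p'.2 = stepRet p.2 pc.2 s
  qI := {p | p.1 ∈ B.qI ∧ p.2 = fun _ => 0}
  qF := {p | p.1 ∈ B.qF ∧ p.2 = fun _ => 0}
  qC := ∅

/-- One step of the flag evolution. -/
noncomputable def flagBody (h : CRAlphabet K A) (B : GMNWA K A Q) (w : List A)
    (ρ : ℕ → Q) (pre g : Fin K → Fin 3) (i : ℕ) : Fin K → Fin 3 :=
  match w[i]? with
  | none => pre
  | some a =>
    if ∃ j, MuAny h w j i then
      match h.kind a with
      | CRKind.ret s => stepRet pre g s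
      | _ => stepTick pre
    else
      match h.kind a with
      | CRKind.call s => if ρ i ∈ B.qC then stepMark pre s else stepTick pre
      | _ => stepTick pre

/-- The canonical flag history associated to a run `ρ` of `B` on `w`. -/
noncomputable def flag (h : CRAlphabet K A) (B : GMNWA K A Q) (w : List A)
    (ρ : ℕ → Q) : ℕ → Fin K → Fin 3
  | 0 => flagBody h B w ρ (fun _ => 0) (fun _ => 0) 0
  | (n+1) =>
      flagBody h B w ρ (flag h B w ρ n)
        (if hr : ∃ j, MuAny h w j (n+1) then flag h B w ρ (Classical.choose hr)
         else fun _ => 0) (n+1)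
  termination_by i => i
  decreasing_by
  · exact Nat.lt_succ_self n
  · exact mu_lt (Classical.choose_spec hr)

/-- The flag before position `i`. -/
noncomputable def preflag (h : CRAlphabet K A) (B : GMNWA K A Q) (w : List A)
    (ρ : ℕ → Q) : ℕ → Fin K → Fin 3
  | 0 => fun _ => 0
  | (n+1) => flag h B w ρ n

variable {h : CRAlphabet K A} {B : GMNWA K A Q} {w : List A} {ρ : ℕ → Q}

lemma flag_eq_body (i : ℕ) :
    flag h B w ρ i = flagBody h B w ρ (preflag h B w ρ i)
      (if hr : ∃ j, MuAny h w j i then flag h B w ρ (Classical.choose hr)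
       else fun _ => 0) i := by
  cases i with
  | zero =>
      have hnr : ¬ ∃ j, MuAny h w j 0 := by
        rintro ⟨j, hj⟩
        exact absurd (mu_lt hj) (by omega)
      rw [flag, dif_neg hnr]
      rfl
  | succ n => rw [flag]; rfl

lemma flag_ret {i j : ℕ} {s : Fin K} {a : A} (hi : w[i]? = some a)
    (hk : h.kind a = CRKind.ret s) (hj : MuAny h w j i) :
    flag h B w ρ i = stepRet (preflag h B w ρ i) (flag h B w ρ j) s := by
  have hr : ∃ j, MuAny h w j i := ⟨j, hj⟩
  have hcj : Classical.choose hr = j := mu_call_unique (Classical.choose_spec hr) hj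
  rw [flag_eq_body, dif_pos hr, hcj, flagBody, hi]
  simp only [if_pos hr, hk]

lemma flag_call_qC {i : ℕ} {s : Fin K} {a : A} (hi : w[i]? = some a)
    (hk : h.kind a = CRKind.call s) (hnr : ¬ ∃ j, MuAny h w j i)
    (hqc : ρ i ∈ B.qC) :
    flag h B w ρ i = stepMark (preflag h B w ρ i) s := by
  rw [flag_eq_body, dif_neg hnr, flagBody, hi]
  simp only [if_neg hnr, hk, if_pos hqc]

lemma flag_call_nqC {i : ℕ} {s : Fin K} {a : A} (hi : w[i]? = some a)
    (hk : h.kind a = CRKind.call s) (hnr : ¬ ∃ j, MuAny h w j i)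
    (hqc : ρ i ∉ B.qC) :
    flag h B w ρ i = stepTick (preflag h B w ρ i) := by
  rw [flag_eq_body, dif_neg hnr, flagBody, hi]
  simp only [if_neg hnr, hk, if_neg hqc]

lemma flag_ret_unmatched {i : ℕ} {s : Fin K} {a : A} (hi : w[i]? = some a)
    (hk : h.kind a = CRKind.ret s) (hnr : ¬ ∃ j, MuAny h w j i) :
    flag h B w ρ i = stepTick (preflag h B w ρ i) := by
  rw [flag_eq_body, dif_neg hnr, flagBody, hi]
  simp only [if_neg hnr, hk]

lemma flag_int {i : ℕ} {a : A} (hi : w[i]? = some a)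
    (hk : h.kind a = CRKind.int) (hnr : ¬ ∃ j, MuAny h w j i) :
    flag h B w ρ i = stepTick (preflag h B w ρ i) := by
  rw [flag_eq_body, dif_neg hnr, flagBody, hi]
  simp only [if_neg hnr, hk]

end construction

section invariant
variable {K : ℕ} {A Q : Type}

lemma tick_ne_two (x : Fin 3) : tick x ≠ 2 := by
  unfold tick; split <;> simp_all

lemma tick_eq_zero_iff (x : Fin 3) : tick x = 0 ↔ x = 0 := by
  unfold tick; split <;> simp_all

/-- The `pre`-flag of position `i` in a run. -/
def Fpre {K : ℕ} (ρ' : ℕ → Q × (Fin K → Fin 3)) : ℕ → Fin K → Fin 3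
  | 0 => fun _ => 0
  | (n+1) => (ρ' n).2

/-- The per-stack invariant of runs of `mkB'`. -/
def InvS (h : CRAlphabet K A) (B : GMNWA K A Q) (w : List A)
    (ρ' : ℕ → Q × (Fin K → Fin 3)) (i : ℕ) (s : Fin K) : Prop :=
  ((ρ' i).2 s = 0 → ∀ b, b ≤ i → (ρ' b).2 s = 2 → ∃ r, r ≤ i ∧ Matched h w s b r) ∧
  ((ρ' i).2 s ≠ 0 → ∃ b, b ≤ i ∧ (ρ' b).2 s = 2 ∧
     (∃ a, w[b]? = some a ∧ h.kind a = CRKind.call s) ∧ (ρ' b).1 ∈ B.qC ∧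
     (∀ r, r ≤ i → ¬ Matched h w s b r) ∧
     (∀ b', b' ≤ i → (ρ' b').2 s = 2 → b' ≠ b → ∃ r, r ≤ i ∧ Matched h w s b' r))

variable {h : CRAlphabet K A} {B : GMNWA K A Q} {w : List A}
  {ρ' : ℕ → Q × (Fin K → Fin 3)}

lemma no_mu_zero : ¬ ∃ j, MuAny h w j 0 := by
  rintro ⟨j, hj⟩
  exact absurd (mu_lt hj) (by omega)

lemma step_cases (hrun : gRun h (mkB' h B) w ρ') {i : ℕ} (hi : i < w.length) :
    ∃ a, w[i]? = some a ∧
    ((∃ s, h.kind a = CRKind.call s ∧ (ρ' i).1 ∈ B.qC ∧ (¬ ∃ j, MuAny h w j i) ∧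
        (ρ' i).2 = stepMark (Fpre ρ' i) s) ∨
     ((ρ' i).1 ∉ B.qC ∧ (¬ ∃ j, MuAny h w j i) ∧ (ρ' i).2 = stepTick (Fpre ρ' i)) ∨
     (∃ j s, MuAny h w j i ∧ h.kind a = CRKind.ret s ∧ (ρ' i).1 ∉ B.qC ∧
        (ρ' i).2 = stepRet (Fpre ρ' i) ((ρ' j).2) s)) := by
  cases i with
  | zero =>
      obtain ⟨q0, hq0, a, ha, hd⟩ := hrun.1
      simp only [mkB'] at hd hq0
      refine ⟨a, ha, ?_⟩
      rcases hd.2 with ⟨hqc, s, hk, hf⟩ | ⟨hqc, hf⟩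
      · exact Or.inl ⟨s, hk, hqc, no_mu_zero, by rw [hf, hq0.2]; rfl⟩
      · exact Or.inr (Or.inl ⟨hqc, no_mu_zero, by rw [hf, hq0.2]; rfl⟩)
  | succ n =>
      obtain ⟨a, ha, hdisj⟩ := hrun.2 (n+1) (by omega) hi
      refine ⟨a, ha, ?_⟩
      rcases hdisj with ⟨j, hj, hd2⟩ | ⟨hnr, hd1⟩
      · simp only [mkB'] at hd2
        obtain ⟨_, hqc, s, hk, hf⟩ := hd2
        exact Or.inr (Or.inr ⟨j, s, hj, hk, hqc, hf⟩)
      · simp only [mkB'] at hd1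
        rcases hd1.2 with ⟨hqc, s, hk, hf⟩ | ⟨hqc, hf⟩
        · exact Or.inl ⟨s, hk, hqc, hnr, hf⟩
        · exact Or.inr (Or.inl ⟨hqc, hnr, hf⟩)

/-- Maintenance of the invariant when the stack-`s` flag just ticks. -/
lemma inv_step_tick {n : ℕ} {s : Fin K}
    (hprev : InvS h B w ρ' n s)
    (hf : (ρ' (n+1)).2 s = tick ((ρ' n).2 s))
    (hno : ∀ b, (ρ' b).2 s = 2 → (∀ r, r ≤ n → ¬ Matched h w s b r) →
      ¬ Matched h w s b (n+1)) :
    InvS h B w ρ' (n+1) s := by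
  constructor
  · intro h0 b hb h2
    rcases Nat.lt_or_ge b (n+1) with hb' | hb'
    · have hfn : (ρ' n).2 s = 0 := by
        rw [hf, tick_eq_zero_iff] at h0; exact h0
      obtain ⟨r, hr, hm⟩ := hprev.1 hfn b (by omega) h2
      exact ⟨r, by omega, hm⟩
    · have : b = n + 1 := by omega
      subst this
      rw [h0] at h2; cases h2
  · intro h0
    have hfn : (ρ' n).2 s ≠ 0 := by
      intro hz; rw [hf, hz] at h0; exact h0 rfl
    obtain ⟨b, hb, h2, hlet, hqc, hnom, hoth⟩ := hprev.2 hfn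
    refine ⟨b, by omega, h2, hlet, hqc, ?_, ?_⟩
    · intro r hr
      rcases Nat.lt_or_ge r (n+1) with hr' | hr'
      · exact hnom r (by omega)
      · have : r = n + 1 := by omega
        subst this
        exact hno b h2 hnom
    · intro b' hb' h2' hne
      rcases Nat.lt_or_ge b' (n+1) with hb'' | hb''
      · obtain ⟨r, hr, hm⟩ := hoth b' (by omega) h2' hne
        exact ⟨r, by omega, hm⟩
      · have : b' = n + 1 := by omega
        subst this
        rw [hf] at h2'
        exact absurd h2' (tick_ne_two _)

/-- The letters at two positions agree. -/
lemma some_inj' {a b : A} {i : ℕ} (h1 : w[i]? = some a) (h2 : w[i]? = some b) :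
    a = b := by rw [h1] at h2; injection h2

/-- If position `i` carries a letter of kind `.ret s₁` then no `Matched` pair
of a different stack ends at `i`. -/
lemma no_cross_match {i : ℕ} {a : A} {s s₁ : Fin K} (ha : w[i]? = some a)
    (hk : h.kind a = CRKind.ret s₁) (hne : s ≠ s₁) {b : ℕ} :
    ¬ Matched h w s b i := by
  intro hm
  obtain ⟨_, _, _, ⟨y, hy, hyr⟩, _⟩ := hm
  have : y = a := some_inj' hy ha
  subst this
  simp only [CRAlphabet.retSet, Set.mem_setOf_eq] at hyr
  rw [hyr] at hk
  cases hk
  exact hne rfl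

/-- Matched pairs never end at a call position. -/
lemma no_match_at_call {i : ℕ} {a : A} {s s₀ : Fin K} (ha : w[i]? = some a)
    (hk : h.kind a = CRKind.call s₀) {b : ℕ} : ¬ Matched h w s b i := by
  intro hm
  obtain ⟨_, _, _, ⟨y, hy, hyr⟩, _⟩ := hm
  have : y = a := some_inj' hy ha
  subst this
  simp only [CRAlphabet.retSet, Set.mem_setOf_eq] at hyr
  rw [hyr] at hk
  cases hk

theorem run_inv (hrun : gRun h (mkB' h B) w ρ') :
    ∀ i, i < w.length → ∀ s, InvS h B w ρ' i s := by
  intro i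
  induction i with
  | zero =>
      intro hi s
      obtain ⟨a, ha, hcase⟩ := step_cases hrun hi
      rcases hcase with ⟨s₀, hk, hqc, hnr, hf⟩ | ⟨hqc, hnr, hf⟩ |
        ⟨j, s₀, hj, _⟩
      · -- marking at position 0
        have hfv : ∀ t, (ρ' 0).2 t = if t = s₀ then 2 else 0 := by
          intro t
          rw [hf]
          simp [stepMark, Fpre, tick]
        constructor
        · intro h0 b hb h2
          interval_cases b
          rw [h0] at h2; cases h2
        · intro h0
          have hss : s = s₀ := by
            by_contra hne
            rw [hfv s, if_neg hne] at h0
            exact h0 rfl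
          subst hss
          refine ⟨0, le_refl _, by rw [hfv]; simp, ⟨a, ha, hk⟩, hqc, ?_, ?_⟩
          · intro r hr hm
            exact absurd hm.1 (by omega)
          · intro b' hb' _ hne
            interval_cases b'
            exact absurd rfl hne
      · have hfv : (ρ' 0).2 s = 0 := by
          rw [hf]; simp [stepTick, Fpre, tick]
        constructor
        · intro h0 b hb h2
          interval_cases b
          rw [h0] at h2; cases h2
        · intro h0; exact absurd hfv h0
      · exact absurd (mu_lt hj) (by omega)
  | succ n ih =>
      intro hi s
      have hprev : InvS h B w ρ' n s := ih (by omega) s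
      obtain ⟨a, ha, hcase⟩ := step_cases hrun hi
      rcases hcase with ⟨s₀, hk, hqc, hnr, hf⟩ | ⟨hqc, hnr, hf⟩ |
        ⟨j, s₀, hj, hk, hqc, hf⟩
      · -- call with calling state
        have hno : ∀ b, ¬ Matched h w s b (n+1) := by
          intro b hm
          exact hnr ⟨b, s, hm⟩
        rcases eq_or_ne s s₀ with hss | hss
        · subst hss
          rcases eq_or_ne ((ρ' n).2 s) 0 with hz | hz
          · -- a fresh mark
            have hfv : (ρ' (n+1)).2 s = 2 := by
              rw [hf]
              simp only [stepMark, Fpre]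
              rw [if_pos ⟨trivial, hz⟩]
            constructor
            · intro h0
              rw [hfv] at h0; cases h0
            · intro _
              refine ⟨n+1, le_refl _, hfv, ⟨a, ha, hk⟩, hqc, ?_, ?_⟩
              · intro r hr hm
                exact absurd hm.1 (by omega)
              · intro b' hb' h2' hne
                obtain ⟨r, hr, hm⟩ := hprev.1 hz b' (by omega) h2'
                exact ⟨r, by omega, hm⟩
          · have hft : (ρ' (n+1)).2 s = tick ((ρ' n).2 s) := by
              rw [hf]
              simp only [stepMark, Fpre]
              rw [if_neg (by tauto)]
            exact inv_step_tick hprev hft (fun b _ _ => hno b)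
        · have hft : (ρ' (n+1)).2 s = tick ((ρ' n).2 s) := by
            rw [hf]
            simp only [stepMark, Fpre]
            exact if_neg (by tauto)
          exact inv_step_tick hprev hft (fun b _ _ => hno b)
      · -- non-calling state, no matched return here
        have hno : ∀ b, ¬ Matched h w s b (n+1) := by
          intro b hm
          exact hnr ⟨b, s, hm⟩
        have hft : (ρ' (n+1)).2 s = tick ((ρ' n).2 s) := by
          rw [hf]; rfl
        exact inv_step_tick hprev hft (fun b _ _ => hno b)
      · -- matched return of stack s₀ with call j
        have hjm : Matched h w s₀ j (n+1) := by
          obtain ⟨s', hm'⟩ := hj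
          obtain ⟨_, _, _, ⟨y, hy, hyr⟩, _⟩ := _root_.id hm'
          have : y = a := some_inj' hy ha
          subst this
          simp only [CRAlphabet.retSet, Set.mem_setOf_eq] at hyr
          rw [hyr] at hk
          cases hk
          exact hm'
        have hjn : j ≤ n := by
          have := mu_lt hj; omega
        rcases eq_or_ne s s₀ with hss | hss
        · subst hss
          rcases eq_or_ne ((ρ' j).2 s) 2 with hg | hg
          · -- the return closing the marked call
            have hfv : (ρ' (n+1)).2 s = 0 := by
              rw [hf]
              simp only [stepRet, Fpre]
              rw [if_pos ⟨trivial, hg⟩]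
            have hfn : (ρ' n).2 s ≠ 0 := by
              intro hz
              obtain ⟨r, hr, hm⟩ := hprev.1 hz j hjn hg
              have := matched_ret_unique h hm hjm
              omega
            obtain ⟨b, hb, h2, hlet, hqcb, hnom, hoth⟩ := hprev.2 hfn
            have hjb : j = b := by
              by_contra hne
              obtain ⟨r, hr, hm⟩ := hoth j hjn hg hne
              have := matched_ret_unique h hm hjm
              omega
            subst hjb
            constructor
            · intro _ b' hb' h2'
              rcases Nat.lt_or_ge b' (n+1) with hb'' | hb''
              · rcases eq_or_ne b' j with he | hne
                · subst he
                  exact ⟨n+1, le_refl _, hjm⟩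
                · obtain ⟨r, hr, hm⟩ := hoth b' (by omega) h2' hne
                  exact ⟨r, by omega, hm⟩
              · have : b' = n+1 := by omega
                subst this
                rw [hfv] at h2'; cases h2'
            · intro h0
              exact absurd hfv h0
          · -- a return not closing the marked call
            have hft : (ρ' (n+1)).2 s = tick ((ρ' n).2 s) := by
              rw [hf]
              simp only [stepRet, Fpre]
              rw [if_neg (by tauto)]
            refine inv_step_tick hprev hft ?_
            intro b h2 hnom hm
            have : b = j := mu_call_unique ⟨s, hm⟩ hj
            subst this
            exact hg h2
        · -- other stacks just tick
          have hft : (ρ' (n+1)).2 s = tick ((ρ' n).2 s) := by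
            rw [hf]
            simp only [stepRet, Fpre]
            rw [if_neg (by tauto)]
          refine inv_step_tick hprev hft ?_
          intro b _ _ hm
          exact no_cross_match ha hk hss hm

end invariant

section main
variable {K : ℕ} {A Q : Type}

lemma mem_callSet_kind {h : CRAlphabet K A} {a : A} {s : Fin K}
    (hk : h.kind a = CRKind.call s) : a ∈ h.callSet s := hk

lemma sound {h : CRAlphabet K A} {B : GMNWA K A Q} {w : List A}
    (hw : w ∈ gLang h (mkB' h B)) : w ∈ gLang h B := by
  obtain ⟨hne, ρ', hrun, hacc⟩ := hw
  have hL : 0 < w.length := List.length_pos_iff.mpr hne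
  refine ⟨hne, fun i => (ρ' i).1, ?_, ?_, ?_⟩
  · -- it is a run of B
    constructor
    · obtain ⟨q0, hq0, a, ha, hd⟩ := hrun.1
      simp only [mkB'] at hd hq0
      exact ⟨q0.1, hq0.1, a, ha, hd.1⟩
    · intro i hi0 hil
      obtain ⟨a, ha, hdisj⟩ := hrun.2 i hi0 hil
      refine ⟨a, ha, ?_⟩
      rcases hdisj with ⟨j, hj, hd2⟩ | ⟨hnr, hd1⟩
      · simp only [mkB'] at hd2
        exact Or.inl ⟨j, hj, hd2.1⟩
      · simp only [mkB'] at hd1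
        exact Or.inr ⟨hnr, hd1.1⟩
  · -- final state
    have := hacc.1
    simp only [mkB', Set.mem_setOf_eq] at this
    exact this.1
  · -- calling condition
    intro i hil hqc
    have hfz : (ρ' (w.length - 1)).2 = fun _ => 0 := by
      have := hacc.1
      simp only [mkB', Set.mem_setOf_eq] at this
      exact this.2
    obtain ⟨a, ha, hcase⟩ := step_cases hrun hil
    rcases hcase with ⟨s₀, hk, _, hnr, hf⟩ | ⟨hqc', _, _⟩ | ⟨j, s₀, hj, hk, hqc', hf⟩
    · rcases eq_or_ne (Fpre ρ' i s₀) 0 with hz | hz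
      · -- freshly marked: closed by the final-flag-zero invariant
        have h2 : (ρ' i).2 s₀ = 2 := by
          rw [hf]
          show (if s₀ = s₀ ∧ Fpre ρ' i s₀ = 0 then (2 : Fin 3) else _) = 2
          rw [if_pos ⟨rfl, hz⟩]
        have hinv := (run_inv hrun (w.length - 1) (by omega) s₀).1
          (by rw [hfz]) i (by omega) h2
        obtain ⟨r, _, hm⟩ := hinv
        exact ⟨r, s₀, hm⟩
      · -- an older marked call is pending; we sit inside its matched pair
        obtain ⟨n, rfl⟩ : ∃ n, i = n + 1 := by
          cases i with
          | zero => exact absurd rfl hz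
          | succ n => exact ⟨n, rfl⟩
        have hfn : (ρ' n).2 s₀ ≠ 0 := hz
        obtain ⟨b, hb, h2, _, _, hnom, _⟩ :=
          (run_inv hrun n (by omega) s₀).2 hfn
        obtain ⟨r, hr, hm⟩ := (run_inv hrun (w.length - 1) (by omega) s₀).1
          (by rw [hfz]) b (by omega) h2
        have hrn : n + 1 < r := by
          rcases Nat.lt_or_ge r (n+1) with h' | h'
          · exact absurd hm (hnom r (by omega))
          · rcases Nat.eq_or_lt_of_le h' with h'' | h''
            · exact absurd hm (h'' ▸ no_match_at_call ha hk)
            · exact h''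
        obtain ⟨r', hm', _⟩ := matched_inner h hm (by omega) hrn ha
          (mem_callSet_kind hk)
        exact ⟨r', s₀, hm'⟩
    · exact absurd hqc hqc'
    · exact absurd hqc hqc'

lemma complete {h : CRAlphabet K A} {B : GMNWA K A Q} {w : List A}
    (hw : w ∈ gLang h B) : w ∈ gLang h (mkB' h B) := by
  obtain ⟨hne, ρ, hrun, hacc⟩ := hw
  have hL : 0 < w.length := List.length_pos_iff.mpr hne
  have hrun' : gRun h (mkB' h B) w (fun i => (ρ i, flag h B w ρ i)) := by
    constructor
    · -- position 0
      obtain ⟨q0, hq0, a, ha, hd1⟩ := hrun.1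
      refine ⟨(q0, fun _ => 0), ⟨hq0, rfl⟩, a, ha, hd1, ?_⟩
      by_cases hqc : ρ 0 ∈ B.qC
      · obtain ⟨j, s₀, hm⟩ := hacc.2 0 hL hqc
        obtain ⟨x, hx, hxc⟩ := hm.2.2.1
        have hk : h.kind a = CRKind.call s₀ := (some_inj' hx ha) ▸ hxc
        refine Or.inl ⟨hqc, s₀, hk, ?_⟩
        show flag h B w ρ 0 = stepMark (fun _ => 0) s₀
        rw [flag_call_qC ha hk no_mu_zero hqc]
        rfl
      · refine Or.inr ⟨hqc, ?_⟩
        show flag h B w ρ 0 = stepTick (fun _ => 0)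
        rcases hka : h.kind a with s₀ | s₀ | _
        · rw [flag_call_nqC ha hka no_mu_zero hqc]; rfl
        · rw [flag_ret_unmatched ha hka no_mu_zero]; rfl
        · rw [flag_int ha hka no_mu_zero]; rfl
    · intro i hi0 hil
      obtain ⟨n, rfl⟩ : ∃ n, i = n + 1 := ⟨i - 1, by omega⟩
      obtain ⟨a, ha, hdisj⟩ := hrun.2 (n+1) hi0 hil
      refine ⟨a, ha, ?_⟩
      by_cases hr : ∃ j, MuAny h w j (n+1)
      · rcases hdisj with ⟨j, hj, hd2⟩ | ⟨hnr, _⟩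
        · obtain ⟨s₀, y, hy, hyr, hm⟩ := mu_ret hj
          have hk : h.kind a = CRKind.ret s₀ := (some_inj' hy ha) ▸ hyr
          have hqc' : ρ (n+1) ∉ B.qC := by
            intro hqc
            obtain ⟨j', s', hm'⟩ := hacc.2 (n+1) hil hqc
            obtain ⟨x, hx, hxc⟩ := hm'.2.2.1
            have hk' : h.kind a = CRKind.call s' := (some_inj' hx ha) ▸ hxc
            rw [hk] at hk'; cases hk'
          refine Or.inl ⟨j, hj, hd2, hqc', s₀, hk, ?_⟩
          show flag h B w ρ (n+1) =
            stepRet (flag h B w ρ n) (flag h B w ρ j) s₀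
          rw [flag_ret ha hk hj]
          rfl
        · exact absurd hr hnr
      · rcases hdisj with ⟨j, hj, _⟩ | ⟨hnr, hd1⟩
        · exact absurd ⟨j, hj⟩ hr
        · refine Or.inr ⟨hnr, hd1, ?_⟩
          by_cases hqc : ρ (n+1) ∈ B.qC
          · obtain ⟨j, s₀, hm⟩ := hacc.2 (n+1) hil hqc
            obtain ⟨x, hx, hxc⟩ := hm.2.2.1
            have hk : h.kind a = CRKind.call s₀ := (some_inj' hx ha) ▸ hxc
            refine Or.inl ⟨hqc, s₀, hk, ?_⟩
            show flag h B w ρ (n+1) = stepMark (flag h B w ρ n) s₀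
            rw [flag_call_qC ha hk hr hqc]
            rfl
          · refine Or.inr ⟨hqc, ?_⟩
            show flag h B w ρ (n+1) = stepTick (flag h B w ρ n)
            rcases hka : h.kind a with s₀ | s₀ | _
            · rw [flag_call_nqC ha hka hr hqc]; rfl
            · rw [flag_ret_unmatched ha hka hr]; rfl
            · rw [flag_int ha hka hr]; rfl
  refine ⟨hne, fun i => (ρ i, flag h B w ρ i), hrun', ?_, ?_⟩
  · -- final state of the product run
    show _ ∈ {p : Q × (Fin K → Fin 3) | p.1 ∈ B.qF ∧ p.2 = fun _ => 0}
    refine ⟨hacc.1, ?_⟩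
    funext s
    by_contra hnz
    obtain ⟨b, hb, h2, ⟨x, hx, hkx⟩, hqcb, hnom, _⟩ :=
      (run_inv hrun' (w.length - 1) (by omega) s).2 hnz
    obtain ⟨j, s', hm⟩ := hacc.2 b (by omega) hqcb
    obtain ⟨y, hy, hyc⟩ := hm.2.2.1
    have hjl : j < w.length := hm.2.1
    have hs' : s' = s :=
      call_stack_eq h hyc ((some_inj' hx hy) ▸ mem_callSet_kind hkx)
    exact hnom j (by omega) (hs' ▸ hm)
  · intro i _ hq
    simp only [mkB', Set.mem_empty_iff_false] at hq

end main

/-- every generalized MNWA `B` can be simulated by an MNWA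
(a generalized MNWA without calling states) `B'` with state set
`Q × {0,1,2}^[K]` recognizing the same language. -/
theorem stmt7 {K : ℕ} {A Q : Type} (h : CRAlphabet K A) (B : GMNWA K A Q) :
    ∃ B' : GMNWA K A (Q × (Fin K → Fin 3)),
      B'.qC = ∅ ∧ gLang h B' = gLang h B := by
  refine ⟨mkB' h B, rfl, ?_⟩
  ext w
  exact ⟨sound, complete⟩
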